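/- For each n ∈ ℕ, the cosets A^i D^j B^k α^r δ^s β^t + ℜ_{n−1}, for all i, j, k, r, s, t ∈ ℕ with i + 2j + k + r + s + t = n, form an F-vector-space basis of the quotient vector space ℜ_n/ℜ_{n−1} (with ℜ_{−1} = 0). -/

import Mathlib

noncomputable section

/-- Generators of the Racah algebra. -/
inductive RGen : Type
  | A | B | C | D

namespace Racah

variable (F : Type) [Field F]

/-- The free algebra on the generators `A`, `B`, `C`, `D`. -/
abbrev FA := FreeAlgebra F RGen

def fA : FA F := FreeAlgebra.ι F RGen.A
def fB : FA F := FreeAlgebra.ι F RGen.B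
def fC : FA F := FreeAlgebra.ι F RGen.C
def fD : FA F := FreeAlgebra.ι F RGen.D

/-- α = [A,D] + AC − BA in the free algebra. -/
def fAl : FA F := (fA F * fD F - fD F * fA F) + fA F * fC F - fB F * fA F
/-- β = [B,D] + BA − CB in the free algebra. -/
def fBe : FA F := (fB F * fD F - fD F * fB F) + fB F * fA F - fC F * fB F
/-- γ = [C,D] + CB − AC in the free algebra. -/
def fGa : FA F := (fC F * fD F - fD F * fC F) + fC F * fB F - fA F * fC F

/-- The defining relations of the Racah algebra:
`[A,B] = [B,C] = [C,A] = 2D` and each of `α`, `β`, `γ` commutes with each of `A`, `B`, `C`, `D`. -/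
inductive Rel : FA F → FA F → Prop
  | AB : Rel (fA F * fB F - fB F * fA F) (2 * fD F)
  | BC : Rel (fB F * fC F - fC F * fB F) (2 * fD F)
  | CA : Rel (fC F * fA F - fA F * fC F) (2 * fD F)
  | cen (c x : FA F) (hc : c = fAl F ∨ c = fBe F ∨ c = fGa F)
      (hx : x = fA F ∨ x = fB F ∨ x = fC F ∨ x = fD F) :
      Rel (c * x) (x * c)

/-- The Racah algebra ℜ. -/
abbrev R := RingQuot (Rel F)

def A : R F := RingQuot.mkAlgHom F (Rel F) (fA F)
def B : R F := RingQuot.mkAlgHom F (Rel F) (fB F)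
def C : R F := RingQuot.mkAlgHom F (Rel F) (fC F)
def D : R F := RingQuot.mkAlgHom F (Rel F) (fD F)

/-- α = [A,D] + AC − BA. -/
def al : R F := (A F * D F - D F * A F) + A F * C F - B F * A F
/-- β = [B,D] + BA − CB. -/
def be : R F := (B F * D F - D F * B F) + B F * A F - C F * B F
/-- γ = [C,D] + CB − AC. -/
def ga : R F := (C F * D F - D F * C F) + C F * B F - A F * C F
/-- δ = A + B + C. -/
def de : R F := A F + B F + C F

end Racah

namespace Racah

variable (F : Type) [Field F]

/-- The monomial `A^i D^j B^k α^r δ^s β^t`. -/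
def mon (i j k r s t : ℕ) : R F :=
  A F ^ i * D F ^ j * B F ^ k * al F ^ r * de F ^ s * be F ^ t

end Racah

namespace Racah

variable (F : Type) [Field F]

/-- The subspace ℜ_n of ℜ spanned by the monomials `A^i D^j B^k α^r δ^s β^t`
with `i + 2j + k + r + s + t ≤ n`. -/
def Rn (n : ℕ) : Submodule F (R F) :=
  Submodule.span F
    {x : R F | ∃ i j k r s t : ℕ, i + 2 * j + k + r + s + t ≤ n ∧ x = mon F i j k r s t}

end Racah

namespace Racah

/-- The degree `i + 2j + k + r + s + t` of the index `(i,j,k,r,s,t)`. -/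
def deg (v : ℕ × ℕ × ℕ × ℕ × ℕ × ℕ) : ℕ :=
  v.1 + 2 * v.2.1 + v.2.2.1 + v.2.2.2.1 + v.2.2.2.2.1 + v.2.2.2.2.2

/-- The monomial indexed by `(i,j,k,r,s,t)`. -/
def monv (F : Type) [Field F] (v : ℕ × ℕ × ℕ × ℕ × ℕ × ℕ) : R F :=
  mon F v.1 v.2.1 v.2.2.1 v.2.2.2.1 v.2.2.2.2.1 v.2.2.2.2.2

/-- ℜ_{n−1}, with the convention ℜ_{−1} = 0. -/
def Rlt (F : Type) [Field F] : ℕ → Submodule F (R F)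
  | 0 => ⊥
  | n + 1 => Rn F n

end Racah


noncomputable section
set_option maxHeartbeats 1000000
set_option synthInstance.maxHeartbeats 400000
namespace RacahProof
variable (F : Type) [Field F]

abbrev P := MvPolynomial (Fin 3) F
abbrev M := (ℕ × ℕ × ℕ) →₀ P F

def En (v : ℕ × ℕ × ℕ) : M F := Finsupp.single v 1

def aOp : M F →ₗ[P F] M F := Finsupp.lmapDomain (P F) (P F) (fun v => (v.1 + 1, v.2.1, v.2.2))

def Lext (f : ℕ × ℕ × ℕ → M F) : M F →ₗ[P F] M F :=
  Finsupp.lsum (P F) (fun v => LinearMap.toSpanSingleton (P F) (M F) (f v))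

def Xa : P F := MvPolynomial.X 0
def Xd : P F := MvPolynomial.X 1
def Xb : P F := MvPolynomial.X 2

def fStep (g : Bool → ℕ × ℕ × ℕ → M F) : Bool → ℕ × ℕ × ℕ → M F
  | true, (0, 0, k) => En F (0, 0, k + 1)
  | true, (0, j + 1, k) =>
      Lext F (g false) (g true (0, j, k)) + Xb F • En F (0, j, k) + Xd F • g true (0, j, k)
        - Lext F (g true) (g true (0, j, k)) - aOp F (g true (0, j, k)) - g true (1, j, k)
  | true, (i + 1, j, k) => aOp F (g true (i, j, k)) - (2 : P F) • g false (i, j, k)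
  | false, (0, j, k) => En F (0, j + 1, k)
  | false, (i + 1, j, k) =>
      aOp F (g false (i, j, k)) - Xa F • En F (i, j, k) + Xd F • En F (i + 1, j, k)
        - En F (i + 2, j, k) - aOp F (g true (i, j, k)) - g true (i + 1, j, k)

def fF : ℕ → Bool → ℕ × ℕ × ℕ → M F
  | 0 => fun _ _ => 0
  | N + 1 => fStep F (fF N)

lemma fF_succ (N : ℕ) : fF F (N + 1) = fStep F (fF F N) := rfl

/-- weighted degree of an index -/
def wdeg (v : ℕ × ℕ × ℕ) : ℕ := v.1 + 2 * v.2.1 + v.2.2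

def wt : Bool → ℕ | true => 1 | false => 2
def rk : Bool → ℕ | true => 2 | false => 1

def mu (t : Bool) (v : ℕ × ℕ × ℕ) : ℕ := 3 * (wt t + wdeg v) + rk t

/-- support degree bound predicate -/
def SuppLe (x : M F) (d : ℕ) : Prop := ∀ u ∈ x.support, wdeg u ≤ d

variable {F}

lemma suppLe_zero (d : ℕ) : SuppLe F (0 : M F) d := by
  intro u hu; simp at hu

lemma suppLe_En {v : ℕ × ℕ × ℕ} {d : ℕ} (h : wdeg v ≤ d) : SuppLe F (En F v) d := by
  intro u hu
  have := Finsupp.support_single_subset hu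
  simp at this; subst this; exact h

lemma suppLe_mono {x : M F} {d d' : ℕ} (h : SuppLe F x d) (hd : d ≤ d') : SuppLe F x d' :=
  fun u hu => le_trans (h u hu) hd

lemma suppLe_add {x y : M F} {d : ℕ} (hx : SuppLe F x d) (hy : SuppLe F y d) :
    SuppLe F (x + y) d := by
  intro u hu
  rcases Finset.mem_union.mp (Finsupp.support_add hu) with h | h
  · exact hx u h
  · exact hy u h

lemma suppLe_sub {x y : M F} {d : ℕ} (hx : SuppLe F x d) (hy : SuppLe F y d) :
    SuppLe F (x - y) d := by
  intro u hu
  rcases Finset.mem_union.mp (Finsupp.support_sub hu) with h | h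
  · exact hx u h
  · exact hy u h

lemma suppLe_smul {x : M F} {d : ℕ} (p : P F) (hx : SuppLe F x d) : SuppLe F (p • x) d := by
  intro u hu
  exact hx u (Finsupp.support_smul hu)

lemma suppLe_aOp {x : M F} {d : ℕ} (hx : SuppLe F x d) : SuppLe F (aOp F x) (d + 1) := by
  intro u hu
  have := Finsupp.mapDomain_support (f := fun v : ℕ × ℕ × ℕ => (v.1 + 1, v.2.1, v.2.2)) hu
  rcases Finset.mem_image.mp this with ⟨w, hw, rfl⟩
  have := hx w hw
  simp [wdeg] at this ⊢
  omega

lemma suppLe_Lext {f : ℕ × ℕ × ℕ → M F} {x : M F} {d : ℕ}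
    (hf : ∀ u ∈ x.support, SuppLe F (f u) d) : SuppLe F (Lext F f x) d := by
  intro u hu
  have h1 : (Lext F f x) = x.sum fun v p => p • f v := by
    simp [Lext, Finsupp.lsum_apply, LinearMap.toSpanSingleton_apply]
    rfl
  rw [h1] at hu
  have := Finsupp.support_sum hu
  rcases Finset.mem_biUnion.mp this with ⟨w, hw, hu'⟩
  exact hf w hw u (Finsupp.support_smul hu')

/-- Main support bound : `fF N t v` is supported in weighted degrees `≤ wt t + wdeg v`. -/
lemma suppLe_fF : ∀ N t v, SuppLe F (fF F N t v) (wt t + wdeg v) := by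
  intro N
  induction N with
  | zero => intro t v; exact suppLe_zero _
  | succ N ih =>
    rintro t ⟨i, j, k⟩
    rw [fF_succ]
    match t, i, j with
    | true, 0, 0 =>
        exact suppLe_En (by simp [wdeg, wt] <;> omega)
    | true, 0, j + 1 =>
        refine suppLe_sub (suppLe_sub (suppLe_sub (suppLe_add (suppLe_add ?_ ?_) ?_) ?_) ?_) ?_
        · refine suppLe_Lext fun u hu => ?_
          have hb := ih true (0, j, k) u hu
          refine suppLe_mono (ih false u) ?_
          simp [wdeg, wt] at hb ⊢
          omega
        · exact suppLe_smul _ (suppLe_En (by simp [wdeg, wt] <;> omega))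
        · exact suppLe_smul _ (suppLe_mono (ih true (0, j, k)) (by simp [wdeg, wt] <;> omega))
        · refine suppLe_Lext fun u hu => ?_
          have hb := ih true (0, j, k) u hu
          refine suppLe_mono (ih true u) ?_
          simp [wdeg, wt] at hb ⊢
          omega
        · exact suppLe_mono (suppLe_aOp (ih true (0, j, k))) (by simp [wdeg, wt] <;> omega)
        · exact suppLe_mono (ih true (1, j, k)) (by simp [wdeg, wt] <;> omega)
    | true, i + 1, j =>
        refine suppLe_sub ?_ ?_
        · exact suppLe_mono (suppLe_aOp (ih true (i, j, k))) (by simp [wdeg, wt] <;> omega)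
        · exact suppLe_mono (suppLe_smul _ (ih false (i, j, k))) (by simp [wdeg, wt] <;> omega)
    | false, 0, j => exact suppLe_En (by simp [wdeg, wt] <;> omega)
    | false, i + 1, j =>
        refine suppLe_sub (suppLe_sub (suppLe_sub (suppLe_add (suppLe_sub ?_ ?_) ?_) ?_) ?_) ?_
        · exact suppLe_mono (suppLe_aOp (ih false (i, j, k))) (by simp [wdeg, wt] <;> omega)
        · exact suppLe_smul _ (suppLe_En (by simp [wdeg, wt] <;> omega))
        · exact suppLe_smul _ (suppLe_En (by simp [wdeg, wt] <;> omega))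
        · exact suppLe_En (by simp [wdeg, wt] <;> omega)
        · exact suppLe_mono (suppLe_aOp (ih true (i, j, k))) (by simp [wdeg, wt] <;> omega)
        · exact suppLe_mono (ih true (i + 1, j, k)) (by simp [wdeg, wt] <;> omega)

lemma Lext_apply (f : ℕ × ℕ × ℕ → M F) (x : M F) :
    Lext F f x = x.sum fun v p => p • f v := by
  simp [Lext, Finsupp.lsum_apply, LinearMap.toSpanSingleton_apply]
  rfl

lemma Lext_congr {f g : ℕ × ℕ × ℕ → M F} {x : M F}
    (h : ∀ u ∈ x.support, f u = g u) : Lext F f x = Lext F g x := by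
  rw [Lext_apply, Lext_apply]
  exact Finsupp.sum_congr fun u hu => by rw [h u hu]

lemma mu_pos (t : Bool) (v : ℕ × ℕ × ℕ) : 0 < mu t v := by
  cases t <;> simp [mu, rk] <;> omega

/-- Stabilization: the fuel recursion stabilizes once the fuel exceeds `mu`. -/
lemma fF_stab : ∀ n t v, mu t v ≤ n → ∀ N₁ N₂, mu t v ≤ N₁ → mu t v ≤ N₂ →
    fF F N₁ t v = fF F N₂ t v := by
  intro n
  induction n using Nat.strong_induction_on with
  | _ n IH =>
  rintro t ⟨i, j, k⟩ hn N₁ N₂ h1 h2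
  obtain ⟨M₁, rfl⟩ : ∃ m, N₁ = m + 1 :=
    ⟨N₁ - 1, by have := mu_pos t (i, j, k); omega⟩
  obtain ⟨M₂, rfl⟩ : ∃ m, N₂ = m + 1 :=
    ⟨N₂ - 1, by have := mu_pos t (i, j, k); omega⟩
  have hrec : ∀ t' v', mu t' v' < mu t (i, j, k) → fF F M₁ t' v' = fF F M₂ t' v' := by
    intro t' v' hlt
    exact IH (mu t' v') (by omega) t' v' le_rfl M₁ M₂ (by omega) (by omega)
  rw [fF_succ, fF_succ]
  match t, i, j with
  | true, 0, 0 => rfl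
  | true, 0, j + 1 =>
      have hb : fF F M₁ true (0, j, k) = fF F M₂ true (0, j, k) :=
        hrec true (0, j, k) (by simp [mu, wt, rk, wdeg] <;> omega)
      have hb1 : fF F M₁ true (1, j, k) = fF F M₂ true (1, j, k) :=
        hrec true (1, j, k) (by simp [mu, wt, rk, wdeg] <;> omega)
      have hLd : Lext F (fF F M₁ false) (fF F M₂ true (0, j, k))
          = Lext F (fF F M₂ false) (fF F M₂ true (0, j, k)) := by
        refine Lext_congr fun u hu => ?_
        have hsupp := suppLe_fF (F := F) M₂ true (0, j, k) u hu
        refine hrec false u ?_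
        simp [mu, wt, rk, wdeg] at hsupp ⊢ <;> omega
      have hLb : Lext F (fF F M₁ true) (fF F M₂ true (0, j, k))
          = Lext F (fF F M₂ true) (fF F M₂ true (0, j, k)) := by
        refine Lext_congr fun u hu => ?_
        have hsupp := suppLe_fF (F := F) M₂ true (0, j, k) u hu
        refine hrec true u ?_
        simp [mu, wt, rk, wdeg] at hsupp ⊢ <;> omega
      simp only [fStep, hb, hb1, hLd, hLb]
  | true, i + 1, j =>
      have hb : fF F M₁ true (i, j, k) = fF F M₂ true (i, j, k) :=
        hrec true (i, j, k) (by simp [mu, wt, rk, wdeg] <;> omega)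
      have hd : fF F M₁ false (i, j, k) = fF F M₂ false (i, j, k) :=
        hrec false (i, j, k) (by simp [mu, wt, rk, wdeg] <;> omega)
      simp only [fStep, hb, hd]
  | false, 0, j => rfl
  | false, i + 1, j =>
      have hb : fF F M₁ true (i, j, k) = fF F M₂ true (i, j, k) :=
        hrec true (i, j, k) (by simp [mu, wt, rk, wdeg] <;> omega)
      have hb1 : fF F M₁ true (i + 1, j, k) = fF F M₂ true (i + 1, j, k) :=
        hrec true (i + 1, j, k) (by simp [mu, wt, rk, wdeg] <;> omega)
      have hd : fF F M₁ false (i, j, k) = fF F M₂ false (i, j, k) :=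
        hrec false (i, j, k) (by simp [mu, wt, rk, wdeg] <;> omega)
      simp only [fStep, hb, hb1, hd]

variable (F)

def bS (v : ℕ × ℕ × ℕ) : M F := fF F (mu true v) true v
def dS (v : ℕ × ℕ × ℕ) : M F := fF F (mu false v) false v

variable {F}

lemma fF_eq_bS {N : ℕ} {v : ℕ × ℕ × ℕ} (h : mu true v ≤ N) : fF F N true v = bS F v :=
  fF_stab N true v (le_trans h le_rfl) N (mu true v) h le_rfl

lemma fF_eq_dS {N : ℕ} {v : ℕ × ℕ × ℕ} (h : mu false v ≤ N) : fF F N false v = dS F v :=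
  fF_stab N false v (le_trans h le_rfl) N (mu false v) h le_rfl

lemma dS_zero (j k : ℕ) : dS F (0, j, k) = En F (0, j + 1, k) := by
  have h : mu false (0, j, k) = (mu false (0, j, k) - 1) + 1 := by
    have := mu_pos false (0, j, k); omega
  rw [dS, h, fF_succ]; rfl

lemma bS_zero (k : ℕ) : bS F (0, 0, k) = En F (0, 0, k + 1) := by
  have h : mu true (0, 0, k) = (mu true (0, 0, k) - 1) + 1 := by
    have := mu_pos true (0, 0, k); omega
  rw [bS, h, fF_succ]; rfl

lemma bS_succ (i j k : ℕ) :
    bS F (i + 1, j, k) = aOp F (bS F (i, j, k)) - (2 : P F) • dS F (i, j, k) := by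
  set N := mu true (i + 1, j, k) - 1 with hN
  have h : mu true (i + 1, j, k) = N + 1 := by
    have := mu_pos true (i + 1, j, k); omega
  rw [bS, h, fF_succ]
  show aOp F (fF F N true (i, j, k)) - (2 : P F) • fF F N false (i, j, k) = _
  rw [fF_eq_bS (by simp [hN, mu, wt, rk, wdeg] <;> omega),
    fF_eq_dS (by simp [hN, mu, wt, rk, wdeg] <;> omega)]

lemma dS_succ (i j k : ℕ) :
    dS F (i + 1, j, k) = aOp F (dS F (i, j, k)) - Xa F • En F (i, j, k)
      + Xd F • En F (i + 1, j, k) - En F (i + 2, j, k) - aOp F (bS F (i, j, k))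
      - bS F (i + 1, j, k) := by
  set N := mu false (i + 1, j, k) - 1 with hN
  have h : mu false (i + 1, j, k) = N + 1 := by
    have := mu_pos false (i + 1, j, k); omega
  rw [dS, h, fF_succ]
  show aOp F (fF F N false (i, j, k)) - Xa F • En F (i, j, k)
      + Xd F • En F (i + 1, j, k) - En F (i + 2, j, k) - aOp F (fF F N true (i, j, k))
      - fF F N true (i + 1, j, k) = _
  rw [fF_eq_dS (by simp [hN, mu, wt, rk, wdeg] <;> omega),
    fF_eq_bS (F := F) (v := (i, j, k)) (by simp [hN, mu, wt, rk, wdeg] <;> omega),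
    fF_eq_bS (F := F) (v := (i + 1, j, k)) (by simp [hN, mu, wt, rk, wdeg] <;> omega)]

lemma bS_mid (j k : ℕ) :
    bS F (0, j + 1, k) = Lext F (dS F) (bS F (0, j, k)) + Xb F • En F (0, j, k)
      + Xd F • bS F (0, j, k) - Lext F (bS F) (bS F (0, j, k)) - aOp F (bS F (0, j, k))
      - bS F (1, j, k) := by
  set N := mu true (0, j + 1, k) - 1 with hN
  have h : mu true (0, j + 1, k) = N + 1 := by
    have := mu_pos true (0, j + 1, k); omega
  rw [bS, h, fF_succ]
  show Lext F (fF F N false) (fF F N true (0, j, k)) + Xb F • En F (0, j, k)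
      + Xd F • fF F N true (0, j, k) - Lext F (fF F N true) (fF F N true (0, j, k))
      - aOp F (fF F N true (0, j, k)) - fF F N true (1, j, k) = _
  have hb : fF F N true (0, j, k) = bS F (0, j, k) :=
    fF_eq_bS (by simp [hN, mu, wt, rk, wdeg] <;> omega)
  have hb1 : fF F N true (1, j, k) = bS F (1, j, k) :=
    fF_eq_bS (by simp [hN, mu, wt, rk, wdeg] <;> omega)
  have hLd : Lext F (fF F N false) (bS F (0, j, k))
      = Lext F (dS F) (bS F (0, j, k)) := by
    refine Lext_congr fun u hu => ?_
    have hsupp := suppLe_fF (F := F) (mu true (0, j, k)) true (0, j, k) u (by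
      rwa [fF_eq_bS le_rfl])
    refine fF_eq_dS ?_
    simp [hN, mu, wt, rk, wdeg] at hsupp ⊢ <;> omega
  have hLb : Lext F (fF F N true) (bS F (0, j, k))
      = Lext F (bS F) (bS F (0, j, k)) := by
    refine Lext_congr fun u hu => ?_
    have hsupp := suppLe_fF (F := F) (mu true (0, j, k)) true (0, j, k) u (by
      rwa [fF_eq_bS le_rfl])
    refine fF_eq_bS ?_
    simp [hN, mu, wt, rk, wdeg] at hsupp ⊢ <;> omega
  rw [hb, hb1, hLd, hLb]

variable (F)

abbrev EndM := Module.End (P F) (M F)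

def aE : EndM F := aOp F
def bE : EndM F := Lext F (bS F)
def dE : EndM F := Lext F (dS F)
def sc (p : P F) : EndM F := algebraMap (P F) (EndM F) p
def cE : EndM F := sc F (Xd F) - aE F - bE F

variable {F}

lemma sc_apply (p : P F) (x : M F) : sc F p x = p • x := rfl

lemma Lext_single (f : ℕ × ℕ × ℕ → M F) (v : ℕ × ℕ × ℕ) (p : P F) :
    Lext F f (Finsupp.single v p) = p • f v := by
  simp [Lext, Finsupp.lsum_single, LinearMap.toSpanSingleton_apply]

lemma En_def (v : ℕ × ℕ × ℕ) : En F v = Finsupp.single v 1 := rfl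

lemma bE_En (v : ℕ × ℕ × ℕ) : bE F (En F v) = bS F v := by
  rw [bE, En_def, Lext_single, one_smul]

lemma dE_En (v : ℕ × ℕ × ℕ) : dE F (En F v) = dS F v := by
  rw [dE, En_def, Lext_single, one_smul]

lemma aE_En (i j k : ℕ) : aE F (En F (i, j, k)) = En F (i + 1, j, k) := by
  simp [aE, aOp, En_def, Finsupp.mapDomain_single]

lemma End_ext {f g : EndM F} (h : ∀ v, f (En F v) = g (En F v)) : f = g := by
  refine Finsupp.lhom_ext fun v p => ?_
  have : (Finsupp.single v p : M F) = p • En F v := by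
    rw [En_def, Finsupp.smul_single, smul_eq_mul, mul_one]
  rw [this, map_smul, map_smul, h v]

lemma ba_eq : bE F * aE F = aE F * bE F - sc F 2 * dE F := by
  refine End_ext fun ⟨i, j, k⟩ => ?_
  simp only [Module.End.mul_apply, LinearMap.sub_apply, aE_En, bE_En, dE_En, sc_apply]
  rw [bS_succ]
  rfl

lemma da_eq : dE F * aE F = aE F * dE F - sc F (Xa F) + sc F (Xd F) * aE F
    - aE F * aE F - aE F * bE F - bE F * aE F := by
  refine End_ext fun ⟨i, j, k⟩ => ?_
  simp only [Module.End.mul_apply, LinearMap.sub_apply, LinearMap.add_apply, aE_En, bE_En,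
    dE_En, sc_apply]
  rw [dS_succ]
  show _ = aOp F (dS F (i, j, k)) - Xa F • En F (i, j, k) + Xd F • En F (i + 1, j, k)
    - En F (i + 2, j, k) - aOp F (bS F (i, j, k)) - bS F (i + 1, j, k)
  rfl

lemma sc_two : sc F 2 = (2 : EndM F) := by
  simp [sc, map_ofNat]

lemma ba_eq' : bE F * aE F = aE F * bE F - 2 * dE F := by
  rw [ba_eq, sc_two]

/-- generic ring certificate for the key commutation -/
lemma cert {R : Type*} [Ring R] (a b d x y : R) :
    (b*d - d*b + b*a - y*b + a*b + b*b)*a - a*(b*d - d*b + b*a - y*b + a*b + b*b) =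
    b*(d*a - (a*d - x + y*a - a*a - a*b - b*a)) + (b*a - (a*b - 2*d))*d - (b*x - x*b)
      + (b*y - y*b)*a - d*(b*a - (a*b - 2*d)) - (d*a - (a*d - x + y*a - a*a - a*b - b*a))*b
      + (a*y - y*a)*b := by
  noncomm_ring

variable (F) in
def TE : EndM F := bE F * dE F - dE F * bE F + bE F * aE F - sc F (Xd F) * bE F
  + aE F * bE F + bE F * bE F

set_option maxHeartbeats 1000000 in
set_option synthInstance.maxHeartbeats 200000 in
lemma key_comm : TE F * aE F = aE F * TE F := by
  have c_ba : bE F * aE F - (aE F * bE F - 2 * dE F) = 0 :=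
    sub_eq_zero.mpr (ba_eq' (F := F))
  have c_da : dE F * aE F - (aE F * dE F - sc F (Xa F) + sc F (Xd F) * aE F
      - aE F * aE F - aE F * bE F - bE F * aE F) = 0 := sub_eq_zero.mpr (da_eq (F := F))
  have c_bal : bE F * sc F (Xa F) - sc F (Xa F) * bE F = 0 :=
    sub_eq_zero.mpr (Algebra.commutes (Xa F) (bE F)).symm
  have c_bde : bE F * sc F (Xd F) - sc F (Xd F) * bE F = 0 :=
    sub_eq_zero.mpr (Algebra.commutes (Xd F) (bE F)).symm
  have c_ade : aE F * sc F (Xd F) - sc F (Xd F) * aE F = 0 :=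
    sub_eq_zero.mpr (Algebra.commutes (Xd F) (aE F)).symm
  have hcert := cert (aE F) (bE F) (dE F) (sc F (Xa F)) (sc F (Xd F))
  rw [c_ba, c_da, c_bal, c_bde, c_ade] at hcert
  simp only [mul_zero, zero_mul, add_zero, sub_zero, zero_add, zero_sub, neg_zero,
    sub_self] at hcert
  have : TE F * aE F - aE F * TE F = 0 := by
    unfold TE
    rw [← hcert]
  exact sub_eq_zero.mp this

lemma cE_def : cE F = sc F (Xd F) - aE F - bE F := rfl

lemma gen1 {R : Type*} [Ring R] (a b d x y : R) :
    a * d - d * a + a * (y - a - b) - b * a =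
      x + (a * y - y * a) - (d * a - (a * d - x + y * a - a * a - a * b - b * a)) := by
  noncomm_ring

lemma gen2 {R : Type*} [Ring R] (a b d y : R) :
    b * d - d * b + b * a - (y - a - b) * b =
      b * d - d * b + b * a - y * b + a * b + b * b := by
  noncomm_ring

lemma gen3 {R : Type*} [Ring R] (a b d y : R) :
    (y - a - b) * d - d * (y - a - b) + (y - a - b) * b - a * (y - a - b) =
      y * d - d * y - (a * d - d * a + a * (y - a - b) - b * a)
        - (b * d - d * b + b * a - (y - a - b) * b) := by
  noncomm_ring

lemma gen4 {R : Type*} [Ring R] (a b y : R) :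
    b * (y - a - b) - (y - a - b) * b = a * b - b * a + (b * y - y * b) := by
  noncomm_ring

lemma gen5 {R : Type*} [Ring R] (a b y : R) :
    (y - a - b) * a - a * (y - a - b) = a * b - b * a + (y * a - a * y) := by
  noncomm_ring

lemma beta_eq : TE F = sc F (Xb F) := by
  refine End_ext fun ⟨i, j, k⟩ => ?_
  induction i with
  | zero =>
    simp only [TE, Module.End.mul_apply, LinearMap.sub_apply, LinearMap.add_apply,
      aE_En, bE_En, dE_En, sc_apply]
    rw [dS_zero, bE_En, bS_mid]
    have h1 : dE F (bS F (0, j, k)) = Lext F (dS F) (bS F (0, j, k)) := rfl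
    have h2 : bE F (bS F (0, j, k)) = Lext F (bS F) (bS F (0, j, k)) := rfl
    have h3 : aE F (bS F (0, j, k)) = aOp F (bS F (0, j, k)) := rfl
    rw [h1, h2, h3]
    abel
  | succ i ih =>
    have hx : En F (i + 1, j, k) = aE F (En F (i, j, k)) := (aE_En i j k).symm
    have hk : TE F (aE F (En F (i, j, k))) = aE F (TE F (En F (i, j, k))) :=
      LinearMap.congr_fun (key_comm (F := F)) (En F (i, j, k))
    rw [hx, hk, ih]
    simp only [sc_apply, map_smul]

lemma alE_eq : aE F * dE F - dE F * aE F + aE F * cE F - bE F * aE F = sc F (Xa F) := by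
  have da0 : dE F * aE F - (aE F * dE F - sc F (Xa F) + sc F (Xd F) * aE F
      - aE F * aE F - aE F * bE F - bE F * aE F) = 0 := sub_eq_zero.mpr (da_eq (F := F))
  have cm : aE F * sc F (Xd F) - sc F (Xd F) * aE F = 0 :=
    sub_eq_zero.mpr (Algebra.commutes (Xd F) (aE F)).symm
  rw [cE_def, gen1 (aE F) (bE F) (dE F) (sc F (Xa F)) (sc F (Xd F)), da0, cm]
  abel

lemma beE_eq : bE F * dE F - dE F * bE F + bE F * aE F - cE F * bE F = sc F (Xb F) := by
  rw [cE_def, gen2 (aE F) (bE F) (dE F) (sc F (Xd F))]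
  exact beta_eq

lemma gaE_eq : cE F * dE F - dE F * cE F + cE F * bE F - aE F * cE F
    = - sc F (Xa F) - sc F (Xb F) := by
  have cm : sc F (Xd F) * dE F - dE F * sc F (Xd F) = 0 :=
    sub_eq_zero.mpr (Algebra.commutes (Xd F) (dE F))
  have h1 := alE_eq (F := F)
  have h2 := beE_eq (F := F)
  rw [cE_def] at h1 h2 ⊢
  rw [gen3 (aE F) (bE F) (dE F) (sc F (Xd F)), cm, h1, h2]
  abel

variable (F) in
def rho : Racah.FA F →ₐ[F] EndM F :=
  FreeAlgebra.lift F fun g => match g with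
    | RGen.A => aE F
    | RGen.B => bE F
    | RGen.C => cE F
    | RGen.D => dE F

@[simp] lemma rho_fA : rho F (Racah.fA F) = aE F := FreeAlgebra.lift_ι_apply _ _
@[simp] lemma rho_fB : rho F (Racah.fB F) = bE F := FreeAlgebra.lift_ι_apply _ _
@[simp] lemma rho_fC : rho F (Racah.fC F) = cE F := FreeAlgebra.lift_ι_apply _ _
@[simp] lemma rho_fD : rho F (Racah.fD F) = dE F := FreeAlgebra.lift_ι_apply _ _

lemma rho_fAl : rho F (Racah.fAl F) = sc F (Xa F) := by
  simp only [Racah.fAl, map_add, map_sub, map_mul, rho_fA, rho_fB, rho_fC, rho_fD]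
  exact alE_eq

lemma rho_fBe : rho F (Racah.fBe F) = sc F (Xb F) := by
  simp only [Racah.fBe, map_add, map_sub, map_mul, rho_fA, rho_fB, rho_fC, rho_fD]
  exact beE_eq

lemma rho_fGa : rho F (Racah.fGa F) = - sc F (Xa F) - sc F (Xb F) := by
  simp only [Racah.fGa, map_add, map_sub, map_mul, rho_fA, rho_fB, rho_fC, rho_fD]
  exact gaE_eq

lemma rho_rel : ∀ ⦃x y : Racah.FA F⦄, Racah.Rel F x y → rho F x = rho F y := by
  intro x y h
  cases h with
  | AB =>
    simp only [map_sub, map_mul, rho_fA, rho_fB, rho_fD, map_ofNat]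
    rw [ba_eq' (F := F)]
    noncomm_ring
  | BC =>
    simp only [map_sub, map_mul, rho_fB, rho_fC, rho_fD, map_ofNat]
    have hc : bE F * sc F (Xd F) - sc F (Xd F) * bE F = 0 :=
      sub_eq_zero.mpr (Algebra.commutes (Xd F) (bE F)).symm
    rw [cE_def, gen4 (aE F) (bE F) (sc F (Xd F)), hc, add_zero, ba_eq' (F := F)]
    noncomm_ring
  | CA =>
    simp only [map_sub, map_mul, rho_fA, rho_fC, rho_fD, map_ofNat]
    have hc : sc F (Xd F) * aE F - aE F * sc F (Xd F) = 0 :=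
      sub_eq_zero.mpr (Algebra.commutes (Xd F) (aE F))
    rw [cE_def, gen5 (aE F) (bE F) (sc F (Xd F)), hc, add_zero, ba_eq' (F := F)]
    noncomm_ring
  | cen c x hc hx =>
    obtain ⟨p, hp⟩ : ∃ p : P F, rho F c = sc F p := by
      rcases hc with rfl | rfl | rfl
      · exact ⟨Xa F, rho_fAl⟩
      · exact ⟨Xb F, rho_fBe⟩
      · exact ⟨- Xa F - Xb F, by rw [rho_fGa]; simp [sc, map_sub, map_neg]⟩
    rw [map_mul, map_mul, hp]
    exact Algebra.commutes p (rho F x)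

variable (F) in
def rhoBar : Racah.R F →ₐ[F] EndM F :=
  RingQuot.liftAlgHom F ⟨rho F, rho_rel⟩

@[simp] lemma rhoBar_A : rhoBar F (Racah.A F) = aE F := by
  rw [Racah.A, rhoBar, RingQuot.liftAlgHom_mkAlgHom_apply]; simp
@[simp] lemma rhoBar_B : rhoBar F (Racah.B F) = bE F := by
  rw [Racah.B, rhoBar, RingQuot.liftAlgHom_mkAlgHom_apply]; simp
@[simp] lemma rhoBar_C : rhoBar F (Racah.C F) = cE F := by
  rw [Racah.C, rhoBar, RingQuot.liftAlgHom_mkAlgHom_apply]; simp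
@[simp] lemma rhoBar_D : rhoBar F (Racah.D F) = dE F := by
  rw [Racah.D, rhoBar, RingQuot.liftAlgHom_mkAlgHom_apply]; simp

lemma rhoBar_al : rhoBar F (Racah.al F) = sc F (Xa F) := by
  simp only [Racah.al, map_add, map_sub, map_mul, rhoBar_A, rhoBar_B, rhoBar_C, rhoBar_D]
  exact alE_eq

lemma rhoBar_be : rhoBar F (Racah.be F) = sc F (Xb F) := by
  simp only [Racah.be, map_add, map_sub, map_mul, rhoBar_A, rhoBar_B, rhoBar_C, rhoBar_D]
  exact beE_eq

lemma rhoBar_de : rhoBar F (Racah.de F) = sc F (Xd F) := by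
  simp only [Racah.de, map_add, rhoBar_A, rhoBar_B, rhoBar_C]
  rw [cE_def]
  abel

lemma sc_En000 (p : P F) :
    sc F p (En F (0, 0, 0)) = Finsupp.single ((0 : ℕ), (0 : ℕ), (0 : ℕ)) p := by
  rw [sc_apply, En_def, Finsupp.smul_single, smul_eq_mul, mul_one]

lemma bE_single (m : ℕ) (p : P F) :
    bE F (Finsupp.single ((0 : ℕ), (0 : ℕ), m) p) = Finsupp.single ((0 : ℕ), (0 : ℕ), m + 1) p := by
  rw [bE, Lext_single, bS_zero, En_def, Finsupp.smul_single, smul_eq_mul, mul_one]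

lemma bE_pow (k m : ℕ) (p : P F) :
    (bE F ^ k) (Finsupp.single ((0 : ℕ), (0 : ℕ), m) p)
      = Finsupp.single ((0 : ℕ), (0 : ℕ), m + k) p := by
  induction k with
  | zero => simp
  | succ k ih =>
    rw [pow_succ', Module.End.mul_apply, ih, bE_single]
    rfl

lemma dE_single (j k : ℕ) (p : P F) :
    dE F (Finsupp.single ((0 : ℕ), j, k) p) = Finsupp.single ((0 : ℕ), j + 1, k) p := by
  rw [dE, Lext_single, dS_zero, En_def, Finsupp.smul_single, smul_eq_mul, mul_one]

lemma dE_pow (J j k : ℕ) (p : P F) :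
    (dE F ^ J) (Finsupp.single ((0 : ℕ), j, k) p) = Finsupp.single ((0 : ℕ), j + J, k) p := by
  induction J with
  | zero => simp
  | succ J ih =>
    rw [pow_succ', Module.End.mul_apply, ih, dE_single]
    rfl

lemma aE_single (i j k : ℕ) (p : P F) :
    aE F (Finsupp.single (i, j, k) p) = Finsupp.single (i + 1, j, k) p := by
  simp [aE, aOp, Finsupp.mapDomain_single]

lemma aE_pow (I i j k : ℕ) (p : P F) :
    (aE F ^ I) (Finsupp.single (i, j, k) p) = Finsupp.single (i + I, j, k) p := by
  induction I with
  | zero => simp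
  | succ I ih =>
    rw [pow_succ', Module.End.mul_apply, ih, aE_single]
    rfl

lemma rhoBar_mon (i j k r s t : ℕ) :
    rhoBar F (Racah.mon F i j k r s t) (En F (0, 0, 0))
      = Finsupp.single (i, j, k) (Xa F ^ r * Xd F ^ s * Xb F ^ t) := by
  have h : rhoBar F (Racah.mon F i j k r s t)
      = aE F ^ i * dE F ^ j * bE F ^ k * sc F (Xa F ^ r * Xd F ^ s * Xb F ^ t) := by
    simp only [Racah.mon, map_mul, map_pow, rhoBar_A, rhoBar_B, rhoBar_D,
      rhoBar_al, rhoBar_de, rhoBar_be, sc, map_mul, map_pow, mul_assoc]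
  rw [h]
  simp only [Module.End.mul_apply]
  rw [sc_En000, bE_pow, dE_pow, aE_pow]
  norm_num

variable (F) in
def pmon (w : ℕ × ℕ × ℕ) : P F := Xa F ^ w.1 * Xd F ^ w.2.1 * Xb F ^ w.2.2

lemma pmon_indep : LinearIndependent F (pmon F) := by
  have hemb : ∀ w : ℕ × ℕ × ℕ, pmon F w = (MvPolynomial.basisMonomials (Fin 3) F)
      (Finsupp.single 0 w.1 + Finsupp.single 1 w.2.1 + Finsupp.single 2 w.2.2) := by
    rintro ⟨r, s, t⟩
    rw [MvPolynomial.coe_basisMonomials]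
    simp only [pmon, Xa, Xd, Xb, MvPolynomial.X_pow_eq_monomial, MvPolynomial.monomial_mul,
      mul_one]
  have hinj : Function.Injective (fun w : ℕ × ℕ × ℕ =>
      (Finsupp.single 0 w.1 + Finsupp.single 1 w.2.1 + Finsupp.single 2 w.2.2 : Fin 3 →₀ ℕ)) := by
    rintro ⟨r, s, t⟩ ⟨r', s', t'⟩ h
    have h0 := congrArg (fun f : Fin 3 →₀ ℕ => f 0) h
    have h1 := congrArg (fun f : Fin 3 →₀ ℕ => f 1) h
    have h2 := congrArg (fun f : Fin 3 →₀ ℕ => f 2) h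
    simp [Finsupp.single_apply] at h0 h1 h2
    simp [h0, h1, h2]
  have := ((MvPolynomial.basisMonomials (Fin 3) F).linearIndependent).comp _ hinj
  rw [show pmon F = _ from funext hemb]
  exact this

lemma single_indep :
    LinearIndependent F (fun v : (ℕ × ℕ × ℕ) × (ℕ × ℕ × ℕ) =>
      (Finsupp.single v.1 (pmon F v.2) : M F)) := by
  have h := Finsupp.linearIndependent_single (R := F) (M := P F)
    (φ := fun _ : ℕ × ℕ × ℕ => ℕ × ℕ × ℕ) (f := fun _ w => pmon F w)
    (fun _ => pmon_indep)
  have := h.comp (fun v : (ℕ × ℕ × ℕ) × (ℕ × ℕ × ℕ) => (⟨v.1, v.2⟩ : Σ _ : ℕ × ℕ × ℕ, ℕ × ℕ × ℕ))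
    (fun v v' hv => by
      cases v; cases v'
      simpa [Sigma.mk.inj_iff] using hv)
  exact this

variable (F) in
def Phi : Racah.R F →ₗ[F] M F :=
  { toFun := fun x => rhoBar F x (En F (0, 0, 0))
    map_add' := fun x y => by
      show rhoBar F (x + y) _ = rhoBar F x _ + rhoBar F y _
      rw [map_add, LinearMap.add_apply]
    map_smul' := fun c x => by
      show rhoBar F (c • x) _ = c • rhoBar F x _
      rw [map_smul, LinearMap.smul_apply] }

lemma Phi_monv (v : ℕ × ℕ × ℕ × ℕ × ℕ × ℕ) :
    Phi F (Racah.monv F v)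
      = Finsupp.single (v.1, v.2.1, v.2.2.1) (pmon F (v.2.2.2.1, v.2.2.2.2.1, v.2.2.2.2.2)) := by
  obtain ⟨i, j, k, r, s, t⟩ := v
  exact rhoBar_mon i j k r s t

lemma monv_indep : LinearIndependent F (Racah.monv F) := by
  apply LinearIndependent.of_comp (Phi F)
  have h := (single_indep (F := F)).comp
    (fun v : ℕ × ℕ × ℕ × ℕ × ℕ × ℕ =>
      ((v.1, v.2.1, v.2.2.1), (v.2.2.2.1, v.2.2.2.2.1, v.2.2.2.2.2)))
    (by
      rintro ⟨a1, a2, a3, a4, a5, a6⟩ ⟨b1, b2, b3, b4, b5, b6⟩ hv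
      simp only [Prod.mk.injEq] at hv
      simp [hv])
  convert h using 1
  funext v
  exact Phi_monv v

section Assembly

variable (F) (n : ℕ)

lemma monv_eq_mon (i j k r s t : ℕ) :
    Racah.monv F (i, j, k, r, s, t) = Racah.mon F i j k r s t := rfl

lemma span_range_fam :
    Submodule.span F (Set.range fun u : {v : ℕ × ℕ × ℕ × ℕ × ℕ × ℕ // Racah.deg v ≤ n} =>
      Racah.monv F u.1) = Racah.Rn F n := by
  rw [Racah.Rn]
  congr 1
  ext x
  constructor
  · rintro ⟨⟨⟨i, j, k, r, s, t⟩, hle⟩, rfl⟩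
    exact ⟨i, j, k, r, s, t, hle, rfl⟩
  · rintro ⟨i, j, k, r, s, t, hle, rfl⟩
    exact ⟨⟨(i, j, k, r, s, t), hle⟩, rfl⟩

lemma Rlt_eq :
    Racah.Rlt F n = Submodule.span F
      (Set.range fun u : {v : ℕ × ℕ × ℕ × ℕ × ℕ × ℕ // Racah.deg v < n} =>
        Racah.monv F u.1) := by
  cases n with
  | zero =>
    have : IsEmpty {v : ℕ × ℕ × ℕ × ℕ × ℕ × ℕ // Racah.deg v < 0} :=
      ⟨fun v => by omega⟩
    rw [Racah.Rlt]
    rw [Set.range_eq_empty, Submodule.span_empty]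
  | succ m =>
    rw [Racah.Rlt, ← span_range_fam F m]
    congr 1
    ext x
    constructor
    · rintro ⟨⟨v, hle⟩, rfl⟩
      exact ⟨⟨v, by omega⟩, rfl⟩
    · rintro ⟨⟨v, hlt⟩, rfl⟩
      exact ⟨⟨v, by omega⟩, rfl⟩

lemma fam_li : LinearIndependent F
    (fun u : {v : ℕ × ℕ × ℕ × ℕ × ℕ × ℕ // Racah.deg v ≤ n} => Racah.monv F u.1) :=
  (monv_indep (F := F)).comp Subtype.val Subtype.val_injective

def Bn : Module.Basis {v : ℕ × ℕ × ℕ × ℕ × ℕ × ℕ // Racah.deg v ≤ n} F (Racah.Rn F n) :=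
  (Module.Basis.span (fam_li F n)).map (LinearEquiv.ofEq _ _ (span_range_fam F n))

lemma Bn_coe (u : {v : ℕ × ℕ × ℕ × ℕ × ℕ × ℕ // Racah.deg v ≤ n}) :
    ((Bn F n u : Racah.Rn F n) : Racah.R F) = Racah.monv F u.1 := by
  rw [Bn, Module.Basis.map_apply]
  have h1 := Module.Basis.span_apply (fam_li F n) u
  have h2 : ((LinearEquiv.ofEq _ _ (span_range_fam F n)) ((Module.Basis.span (fam_li F n)) u) :
      Racah.R F) = ((Module.Basis.span (fam_li F n) u : _) : Racah.R F) := rfl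
  rw [h2, h1]

def em (v : {v : ℕ × ℕ × ℕ × ℕ × ℕ × ℕ // Racah.deg v = n}) :
    {v : ℕ × ℕ × ℕ × ℕ × ℕ × ℕ // Racah.deg v ≤ n} := ⟨v.1, le_of_eq v.2⟩

lemma em_inj : Function.Injective (em n) := by
  rintro ⟨v, hv⟩ ⟨w, hw⟩ h
  simpa [em] using congrArg Subtype.val h

def piMap : Racah.Rn F n →ₗ[F] ({v : ℕ × ℕ × ℕ × ℕ × ℕ × ℕ // Racah.deg v = n} →₀ F) :=
  (Finsupp.lcomapDomain (em n) (em_inj n)).comp (Bn F n).repr.toLinearMap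

lemma piMap_apply (x : Racah.Rn F n) (v : {v : ℕ × ℕ × ℕ × ℕ × ℕ × ℕ // Racah.deg v = n}) :
    piMap F n x v = (Bn F n).repr x (em n v) := rfl

lemma mem_Rn (v : {v : ℕ × ℕ × ℕ × ℕ × ℕ × ℕ // Racah.deg v = n}) :
    Racah.monv F v.1 ∈ Racah.Rn F n := by
  rw [← span_range_fam F n]
  exact Submodule.subset_span ⟨em n v, rfl⟩

lemma BnEm (v : {v : ℕ × ℕ × ℕ × ℕ × ℕ × ℕ // Racah.deg v = n}) :
    Bn F n (em n v) = ⟨Racah.monv F v.1, mem_Rn F n v⟩ :=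
  Subtype.ext (Bn_coe F n (em n v))

lemma piMap_Bn (v : {v : ℕ × ℕ × ℕ × ℕ × ℕ × ℕ // Racah.deg v = n}) :
    piMap F n ⟨Racah.monv F v.1, mem_Rn F n v⟩ = Finsupp.single v 1 := by
  ext w
  rw [piMap_apply, ← BnEm, Module.Basis.repr_self]
  simp [Finsupp.single_apply, (em_inj n).eq_iff]

lemma val_eq_lc (x : Racah.Rn F n) :
    (x : Racah.R F) = Finsupp.linearCombination F
      (fun u : {v : ℕ × ℕ × ℕ × ℕ × ℕ × ℕ // Racah.deg v ≤ n} => Racah.monv F u.1)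
      ((Bn F n).repr x) := by
  have h1 : (Finsupp.linearCombination F ⇑(Bn F n)) ((Bn F n).repr x) = x :=
    Module.Basis.linearCombination_repr _ x
  have h2 := congrArg ((Racah.Rn F n).subtype) h1
  rw [Finsupp.apply_linearCombination] at h2
  have h3 : (⇑(Racah.Rn F n).subtype ∘ ⇑(Bn F n)) =
      fun u : {v : ℕ × ℕ × ℕ × ℕ × ℕ × ℕ // Racah.deg v ≤ n} => Racah.monv F u.1 :=
    funext fun u => Bn_coe F n u
  rw [h3] at h2
  exact h2.symm

lemma ker_piMap :
    LinearMap.ker (piMap F n) = (Racah.Rlt F n).comap (Racah.Rn F n).subtype := by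
  ext x
  simp only [LinearMap.mem_ker, Submodule.mem_comap, Submodule.subtype_apply]
  constructor
  · intro h0
    have hcoord : ∀ v : {v : ℕ × ℕ × ℕ × ℕ × ℕ × ℕ // Racah.deg v = n},
        (Bn F n).repr x (em n v) = 0 := by
      intro v
      rw [← piMap_apply]
      rw [h0]
      rfl
    rw [val_eq_lc F n x, Rlt_eq, Finsupp.linearCombination_apply]
    refine Submodule.sum_mem _ fun u hu => ?_
    refine Submodule.smul_mem _ _ ?_
    have hne : Racah.deg u.1 ≠ n := by
      intro hdeg
      have := hcoord ⟨u.1, hdeg⟩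
      have heq : em n ⟨u.1, hdeg⟩ = u := Subtype.ext rfl
      rw [heq] at this
      exact (Finsupp.mem_support_iff.mp hu) this
    have hlt : Racah.deg u.1 < n := lt_of_le_of_ne u.2 hne
    exact Submodule.subset_span ⟨⟨u.1, hlt⟩, rfl⟩
  · intro hmem
    rw [Rlt_eq, Finsupp.mem_span_range_iff_exists_finsupp] at hmem
    obtain ⟨c, hc⟩ := hmem
    have h1 : Finsupp.linearCombination F (Racah.monv F)
        (Finsupp.mapDomain Subtype.val ((Bn F n).repr x)) = (x : Racah.R F) := by
      rw [Finsupp.linearCombination_mapDomain]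
      exact (val_eq_lc F n x).symm
    have h2 : Finsupp.linearCombination F (Racah.monv F)
        (Finsupp.mapDomain Subtype.val c) = (x : Racah.R F) := by
      rw [Finsupp.linearCombination_mapDomain]
      rw [Finsupp.linearCombination_apply]
      exact hc
    have hceq : Finsupp.mapDomain Subtype.val ((Bn F n).repr x)
        = Finsupp.mapDomain Subtype.val c :=
      (monv_indep (F := F))
        (h1.trans h2.symm)
    ext v
    rw [piMap_apply]
    have e1 : (Finsupp.mapDomain Subtype.val ((Bn F n).repr x)) (em n v).1 =
        (Bn F n).repr x (em n v) :=
      Finsupp.mapDomain_apply Subtype.val_injective _ _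
    have e2 : (Finsupp.mapDomain Subtype.val c) v.1 = 0 := by
      refine Finsupp.mapDomain_notin_range _ _ ?_
      rintro ⟨⟨w, hw⟩, hweq⟩
      have hww : w = v.1 := hweq
      have hv := v.2
      rw [hww] at hw
      omega
    have : (em n v).1 = v.1 := rfl
    rw [← e1, this, hceq, e2]
    rfl

lemma piMap_surj : Function.Surjective (piMap F n) := by
  rw [← LinearMap.range_eq_top]
  apply top_unique
  rw [← Finsupp.basisSingleOne.span_eq]
  rw [Submodule.span_le]
  rintro _ ⟨v, rfl⟩
  refine ⟨⟨Racah.monv F v.1, mem_Rn F n v⟩, ?_⟩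
  rw [piMap_Bn]
  rfl

def qMap : (@HasQuotient.Quotient (Racah.Rn F n) (Submodule F (Racah.Rn F n))
        (@Submodule.hasQuotient F (Racah.Rn F n) _ (Racah.Rn F n).addCommGroup (Racah.Rn F n).module)
        ((Racah.Rlt F n).comap (Racah.Rn F n).subtype)) →ₗ[F]
    ({v : ℕ × ℕ × ℕ × ℕ × ℕ × ℕ // Racah.deg v = n} →₀ F) :=
  Submodule.liftQ _ (piMap F n) (le_of_eq (ker_piMap F n).symm)

lemma qMap_bij : Function.Bijective (qMap F n) := by
  constructor
  · rw [← LinearMap.ker_eq_bot]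
    exact Submodule.ker_liftQ_eq_bot _ _ _ (le_of_eq (ker_piMap F n))
  · intro c
    obtain ⟨x, hx⟩ := piMap_surj F n c
    exact ⟨Submodule.Quotient.mk x, by rwa [qMap, Submodule.liftQ_apply]⟩

def equivQ : (@HasQuotient.Quotient (Racah.Rn F n) (Submodule F (Racah.Rn F n))
        (@Submodule.hasQuotient F (Racah.Rn F n) _ (Racah.Rn F n).addCommGroup (Racah.Rn F n).module)
        ((Racah.Rlt F n).comap (Racah.Rn F n).subtype)) ≃ₗ[F]
    ({v : ℕ × ℕ × ℕ × ℕ × ℕ × ℕ // Racah.deg v = n} →₀ F) :=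
  LinearEquiv.ofBijective (qMap F n) (qMap_bij F n)

end Assembly

end RacahProof

open Racah in
/-- for each n, the cosets of the monomials `A^i D^j B^k α^r δ^s β^t` with
`i + 2j + k + r + s + t = n` form an F-basis of ℜ_n/ℜ_{n−1} (with ℜ_{−1} = 0). -/
theorem stmt15 (F : Type) [Field F] (h2 : (2 : F) ≠ 0) (n : ℕ) :
    ∃ b : Module.Basis {v : ℕ × ℕ × ℕ × ℕ × ℕ × ℕ // deg v = n} F
      (@HasQuotient.Quotient (Rn F n) (Submodule F (Rn F n))
        (@Submodule.hasQuotient F (Rn F n) _ (Rn F n).addCommGroup (Rn F n).module)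
        ((Rlt F n).comap (Rn F n).subtype)),
      ∀ (v : {v : ℕ × ℕ × ℕ × ℕ × ℕ × ℕ // deg v = n}) (h : monv F v.1 ∈ Rn F n),
        b v = Submodule.Quotient.mk ⟨monv F v.1, h⟩ := by
  refine ⟨(Finsupp.basisSingleOne).map (RacahProof.equivQ F n).symm, fun v h => ?_⟩
  rw [Module.Basis.map_apply]
  rw [LinearEquiv.symm_apply_eq]
  have : (RacahProof.equivQ F n) (Submodule.Quotient.mk ⟨monv F v.1, h⟩)
      = RacahProof.piMap F n ⟨monv F v.1, h⟩ := by
    rw [RacahProof.equivQ, LinearEquiv.ofBijective_apply, RacahProof.qMap,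
      Submodule.liftQ_apply]
  rw [this]
  have hp : (⟨monv F v.1, h⟩ : Rn F n) = ⟨monv F v.1, RacahProof.mem_Rn F n v⟩ := rfl
  rw [hp, RacahProof.piMap_Bn]
  simp
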